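/- Let P and Q be real Banach spaces, let a : P → P be a continuous linear automorphism with continuous inverse a⁻¹, and let b : Q → P, c : P → Q, d : Q → Q, and T : P → Q be continuous linear maps. Let δ > 0 with ‖T‖ ≤ δ and suppose ‖a⁻¹‖·‖b‖·δ < 1. Then the continuous linear map a + b∘T : P → P is invertible with continuous inverse satisfying ‖(a + b∘T)⁻¹‖ ≤ ‖a⁻¹‖ / (1 − ‖a⁻¹‖·‖b‖·δ), and the operator Λ(T) := (c + d∘T) ∘ (a + b∘T)⁻¹ : P → Q satisfies ‖Λ(T)‖ ≤ (‖c‖ + ‖d‖·δ)·‖a⁻¹‖ / (1 − ‖a⁻¹‖·‖b‖·δ). In particular, if (‖c‖ + ‖d‖·δ)·‖a⁻¹‖ / (1 − ‖a⁻¹‖·‖b‖·δ) ≤ δ, then ‖Λ(T)‖ ≤ δ. -/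
import Mathlib

theorem graph_transform_derivative_bound
    {P Q : Type*} [NormedAddCommGroup P] [NormedSpace ℝ P] [CompleteSpace P]
    [NormedAddCommGroup Q] [NormedSpace ℝ Q] [CompleteSpace Q]
    (a : P ≃L[ℝ] P) (b : Q →L[ℝ] P) (c : P →L[ℝ] Q) (d : Q →L[ℝ] Q)
    (T : P →L[ℝ] Q) (δ : ℝ) (hδ : 0 < δ) (hT : ‖T‖ ≤ δ)
    (hsmall : ‖(a.symm : P →L[ℝ] P)‖ * ‖b‖ * δ < 1) :
    ∃ e : P ≃L[ℝ] P,
      (e : P →L[ℝ] P) = (a : P →L[ℝ] P) + b.comp T ∧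
      ‖(e.symm : P →L[ℝ] P)‖ ≤
        ‖(a.symm : P →L[ℝ] P)‖ / (1 - ‖(a.symm : P →L[ℝ] P)‖ * ‖b‖ * δ) ∧
      ‖(c + d.comp T).comp (e.symm : P →L[ℝ] P)‖ ≤
        (‖c‖ + ‖d‖ * δ) * ‖(a.symm : P →L[ℝ] P)‖ /
          (1 - ‖(a.symm : P →L[ℝ] P)‖ * ‖b‖ * δ) ∧
      ((‖c‖ + ‖d‖ * δ) * ‖(a.symm : P →L[ℝ] P)‖ /
          (1 - ‖(a.symm : P →L[ℝ] P)‖ * ‖b‖ * δ) ≤ δ →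
        ‖(c + d.comp T).comp (e.symm : P →L[ℝ] P)‖ ≤ δ) := by
  set A : ℝ := ‖(a.symm : P →L[ℝ] P)‖ with hA
  set K : ℝ := A * ‖b‖ * δ with hK
  have hK0 : 0 ≤ K := by positivity
  have hK1 : 0 < 1 - K := by linarith
  -- the perturbation u = a⁻¹ ∘ b ∘ T
  set u : P →L[ℝ] P := (a.symm : P →L[ℝ] P).comp (b.comp T) with hu
  have hunorm : ‖u‖ ≤ K := by
    calc ‖u‖ ≤ A * ‖b.comp T‖ := ContinuousLinearMap.opNorm_comp_le _ _
    _ ≤ A * (‖b‖ * ‖T‖) := by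
        have := ContinuousLinearMap.opNorm_comp_le b T
        nlinarith [norm_nonneg (a.symm : P →L[ℝ] P)]
    _ ≤ K := by
        rw [hK]
        have hb := norm_nonneg b
        nlinarith [norm_nonneg (a.symm : P →L[ℝ] P)]
  have hneg : ‖-u‖ < 1 := by rw [norm_neg]; linarith
  set w : (P →L[ℝ] P)ˣ := Units.oneSub (-u) hneg with hw
  have hwval : (w : P →L[ℝ] P) = 1 + u := by
    rw [hw, Units.val_oneSub, sub_neg_eq_add]
  have hwinv : ‖(↑w⁻¹ : P →L[ℝ] P)‖ ≤ (1 - K)⁻¹ := by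
    have h1 : (↑w⁻¹ : P →L[ℝ] P) = ∑' n : ℕ, (-u) ^ n := rfl
    rw [h1]
    have h1le : ‖(1 : P →L[ℝ] P)‖ ≤ 1 := ContinuousLinearMap.norm_id_le
    have hmain := tsum_geometric_le_of_norm_lt_one (-u) hneg
    have hmono : (1 - ‖-u‖)⁻¹ ≤ (1 - K)⁻¹ := by
      apply inv_anti₀ hK1
      rw [norm_neg]; linarith
    linarith
  -- the equivalence e
  set e : P ≃L[ℝ] P := (ContinuousLinearEquiv.ofUnit w).trans a with he
  have hcoe : (e.symm : P →L[ℝ] P)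
      = (↑w⁻¹ : P →L[ℝ] P).comp (a.symm : P →L[ℝ] P) := by
    ext x; rfl
  have hesymm : ‖(e.symm : P →L[ℝ] P)‖ ≤ A / (1 - K) := by
    rw [hcoe]
    calc ‖(↑w⁻¹ : P →L[ℝ] P).comp (a.symm : P →L[ℝ] P)‖
        ≤ ‖(↑w⁻¹ : P →L[ℝ] P)‖ * A := ContinuousLinearMap.opNorm_comp_le _ _
    _ ≤ (1 - K)⁻¹ * A := by
        have := norm_nonneg (a.symm : P →L[ℝ] P)
        nlinarith
    _ = A / (1 - K) := by rw [div_eq_mul_inv, mul_comm]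
  have hcdT : ‖c + d.comp T‖ ≤ ‖c‖ + ‖d‖ * δ := by
    calc ‖c + d.comp T‖ ≤ ‖c‖ + ‖d.comp T‖ := norm_add_le _ _
    _ ≤ ‖c‖ + ‖d‖ * δ := by
        have h1 := ContinuousLinearMap.opNorm_comp_le d T
        have h2 := norm_nonneg d
        nlinarith
  have hbound : ‖(c + d.comp T).comp (e.symm : P →L[ℝ] P)‖
      ≤ (‖c‖ + ‖d‖ * δ) * A / (1 - K) := by
    calc ‖(c + d.comp T).comp (e.symm : P →L[ℝ] P)‖
        ≤ ‖c + d.comp T‖ * ‖(e.symm : P →L[ℝ] P)‖ :=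
          ContinuousLinearMap.opNorm_comp_le _ _
    _ ≤ (‖c‖ + ‖d‖ * δ) * (A / (1 - K)) := by
        have h1 := norm_nonneg (c + d.comp T)
        have h2 := norm_nonneg ((e.symm : P →L[ℝ] P))
        have h3 : (0:ℝ) ≤ ‖c‖ + ‖d‖ * δ := by positivity
        nlinarith
    _ = (‖c‖ + ‖d‖ * δ) * A / (1 - K) := by ring
  refine ⟨e, ?_, hesymm, hbound, fun h => le_trans hbound h⟩
  have hwcoe : ((ContinuousLinearEquiv.ofUnit w : P ≃L[ℝ] P) : P →L[ℝ] P)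
      = (w : P →L[ℝ] P) := rfl
  ext x
  have h1 : (e : P →L[ℝ] P) x = a ((w : P →L[ℝ] P) x) := rfl
  rw [h1, hwval, hu]
  simp [ContinuousLinearMap.add_apply]
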